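/- Let V be a quaternionic Hermitian vector space and let η be an SU(2)-invariant alternating bilinear form on V. Let A be the endomorphism of V determined by ⟨A x, y⟩ = η(x, y) for all x, y ∈ V. Then the endomorphism I∘A is self-adjoint, and its eigenvalues occur in pairs σ, −σ: for every real number μ, μ is an eigenvalue of I∘A if and only if −μ is an eigenvalue of I∘A. -/
import Mathlib


open RealInnerProductSpace

/-- On a quaternionic Hermitian vector space, the endomorphism `I ∘ A`
associated to an `SU(2)`-invariant alternating bilinear form `η` (via `⟪A x, y⟫ = η x y`)
is self-adjoint and its eigenvalues occur in pairs `σ, -σ`. -/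
theorem eigenvalues_of_su2_invariant_form_pair
    {V : Type*} [NormedAddCommGroup V] [InnerProductSpace ℝ V] [FiniteDimensional ℝ V]
    (I J K : V →ₗ[ℝ] V)
    (hIiso : ∀ x y : V, ⟪I x, I y⟫ = ⟪x, y⟫)
    (hJiso : ∀ x y : V, ⟪J x, J y⟫ = ⟪x, y⟫)
    (hKiso : ∀ x y : V, ⟪K x, K y⟫ = ⟪x, y⟫)
    (hI2 : ∀ x : V, I (I x) = -x)
    (hJ2 : ∀ x : V, J (J x) = -x)
    (hIJ : ∀ x : V, I (J x) = -(J (I x)))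
    (hK : ∀ x : V, K x = I (J x))
    (η : V →ₗ[ℝ] V →ₗ[ℝ] ℝ)
    (halt : ∀ x : V, η x x = 0)
    (hSU2 : ∀ x y : V,
      η (I x) (I y) = η x y ∧ η (J x) (J y) = η x y ∧ η (K x) (K y) = η x y)
    (A : V →ₗ[ℝ] V)
    (hA : ∀ x y : V, ⟪A x, y⟫ = η x y) :
    (I ∘ₗ A).IsSymmetric ∧
      ∀ μ : ℝ, Module.End.HasEigenvalue (I ∘ₗ A) μ ↔
        Module.End.HasEigenvalue (I ∘ₗ A) (-μ) := by
  -- antisymmetry of η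
  have hanti : ∀ x y : V, η x y = -η y x := by
    intro x y
    have h := halt (x + y)
    simp only [map_add, LinearMap.add_apply, halt] at h
    linarith
  -- I is skew-adjoint
  have hIadj : ∀ x y : V, ⟪I x, y⟫ = -⟪x, I y⟫ := by
    intro x y
    have h := hIiso x (I y)
    rw [hI2] at h
    rw [inner_neg_right] at h
    linarith
  have hJadj : ∀ x y : V, ⟪J x, y⟫ = -⟪x, J y⟫ := by
    intro x y
    have h := hJiso x (J y)
    rw [hJ2] at h
    rw [inner_neg_right] at h
    linarith
  -- key formula for ⟪(I ∘ A) x, y⟫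
  have hB : ∀ x y : V, ⟪(I ∘ₗ A) x, y⟫ = η (I x) y := by
    intro x y
    have h1 : ⟪I (A x), y⟫ = -⟪A x, I y⟫ := hIadj (A x) y
    have h2 : η (I x) (I (I y)) = η x (I y) := (hSU2 x (I y)).1
    rw [hI2] at h2
    simp only [map_neg, LinearMap.neg_apply] at h2
    have : η (I x) y = -η x (I y) := by linarith
    simp only [LinearMap.comp_apply, h1, hA, this]
  have hsym : (I ∘ₗ A).IsSymmetric := by
    intro x y
    rw [hB, real_inner_comm, hB, hanti (I y) x]
    have h2 : η (I x) (I (I y)) = η x (I y) := (hSU2 x (I y)).1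
    rw [hI2] at h2
    simp only [map_neg, LinearMap.neg_apply] at h2
    linarith
  refine ⟨hsym, ?_⟩
  -- anticommutation: (I∘A) (J x) = -(J ((I∘A) x))
  have hBJ : ∀ x : V, (I ∘ₗ A) (J x) = -(J ((I ∘ₗ A) x)) := by
    intro x
    apply ext_inner_right ℝ
    intro y
    rw [hB]
    rw [inner_neg_left]
    rw [hJadj]
    rw [hB]
    have hinv : η (I x) (J y) = η (J (I x)) (J (J y)) := ((hSU2 (I x) (J y)).2.1).symm
    rw [hJ2] at hinv
    simp only [map_neg, LinearMap.neg_apply] at hinv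
    have : η (I x) (J y) = η (I (J x)) y := by
      rw [hIJ]
      simp only [map_neg, LinearMap.neg_apply]
      linarith
    linarith
  -- eigenvalue pairing
  have key : ∀ μ : ℝ, Module.End.HasEigenvalue (I ∘ₗ A) μ →
      Module.End.HasEigenvalue (I ∘ₗ A) (-μ) := by
    intro μ hμ
    obtain ⟨v, hv, hv0⟩ := hμ.exists_hasEigenvector
    have hJv0 : J v ≠ 0 := by
      intro h
      apply hv0
      have := hJ2 v
      rw [h] at this
      simp at this
      simpa using this
    have hmem : (I ∘ₗ A) (J v) = (-μ) • J v := by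
      rw [hBJ]
      rw [Module.End.mem_eigenspace_iff] at hv
      rw [hv]
      simp [neg_smul]
    exact Module.End.hasEigenvalue_of_hasEigenvector
      ⟨Module.End.mem_eigenspace_iff.mpr hmem, hJv0⟩
  intro μ
  exact ⟨key μ, fun h => by simpa using key (-μ) h⟩
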